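/- In the Weyl group W(D_8) of signed permutations of {1,...,8} with an even number of sign changes, acting on the 240 packings of PG(3,2) via the identification with maximal orthogonal 8-subsets of the 64 E_8 roots Ψ, the kernel of the action is exactly the center {1, w_0}, where w_0 is the total sign change on all 8 coordinates. -/
import Mathlib

open Finset
open scoped symmDiff

set_option maxRecDepth 10000

/-- Membership in Ψ: the 64 E8 roots with all coordinates ±1/2, eighth coordinate 1/2,
and an even number of negative coordinates. -/
def IsPsi (α : Fin 8 → ℝ) : Prop :=
  (∀ i, α i = 1/2 ∨ α i = -(1/2)) ∧ α 7 = 1/2 ∧ Even {i : Fin 8 | α i = -(1/2)}.ncard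

/-- An element of Ω_Ψ: a maximal orthogonal subset of Ψ, i.e. 8 pairwise orthogonal
roots of Ψ.  These correspond to the 240 packings of PG(3,2). -/
def IsOmegaPsi (A : Set (Fin 8 → ℝ)) : Prop :=
  (∀ α ∈ A, IsPsi α) ∧ A.ncard = 8 ∧
    A.Pairwise (fun α β => ∑ i, α i * β i = 0)

/-- The action of a signed permutation g on a maximal orthogonal subset A of Ψ,
identifying each root β with the pair {β, −β}. -/
def psiAct (g : (Fin 8 → ℝ) →ₗ[ℝ] (Fin 8 → ℝ)) (A : Set (Fin 8 → ℝ)) : Set (Fin 8 → ℝ) :=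
  {β | IsPsi β ∧ ∃ α ∈ A, g α = β ∨ g α = -β}

/- ## Auxiliary machinery -/

noncomputable def vv (S : Finset (Fin 8)) : Fin 8 → ℝ := fun i => if i ∈ S then -(1/2) else 1/2

lemma vv_inj : Function.Injective vv := by
  intro S T h
  ext i
  have := congrFun h i
  by_cases h1 : i ∈ S <;> by_cases h2 : i ∈ T <;> simp [vv, h1, h2] at this ⊢ <;> norm_num at this

lemma vv_compl (S : Finset (Fin 8)) : vv Sᶜ = -vv S := by
  funext i
  by_cases h : i ∈ S <;> simp [vv, h]

lemma negset_vv (S : Finset (Fin 8)) : {i : Fin 8 | vv S i = -(1/2)} = ↑S := by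
  ext i
  by_cases h : i ∈ S <;> simp [vv, h] <;> norm_num

lemma isPsi_vv {S : Finset (Fin 8)} (h7 : 7 ∉ S) (he : Even S.card) : IsPsi (vv S) := by
  refine ⟨fun i => ?_, ?_, ?_⟩
  · by_cases h : i ∈ S <;> simp [vv, h]
  · simp [vv, h7]
  · rwa [negset_vv, Set.ncard_coe_finset]

lemma even_card_symmDiff {s t : Finset (Fin 8)} (hs : Even s.card) (ht : Even t.card) :
    Even ((s ∆ t).card) := by
  have hd : Disjoint (s \ t) (t \ s) := disjoint_sdiff_sdiff
  have h1 : (s ∆ t).card = (s \ t).card + (t \ s).card := by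
    rw [symmDiff_def, Finset.sup_eq_union, Finset.card_union_of_disjoint hd]
  have h2 := Finset.card_sdiff_add_card_inter s t
  have h3 := Finset.card_sdiff_add_card_inter t s
  rw [Finset.inter_comm] at h3
  obtain ⟨a, ha⟩ := hs
  obtain ⟨b, hb⟩ := ht
  refine ⟨((s ∆ t).card)/2, by omega⟩

lemma inner_vv {S T : Finset (Fin 8)} (h : (S ∆ T).card = 4) :
    ∑ i, vv S i * vv T i = 0 := by
  have : ∀ i : Fin 8, vv S i * vv T i = 1/4 + (if i ∈ S ∆ T then (-(1/2):ℝ) else 0) := by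
    intro i
    by_cases h1 : i ∈ S <;> by_cases h2 : i ∈ T <;>
      simp [vv, h1, h2, Finset.mem_symmDiff] <;> norm_num
  rw [Finset.sum_congr rfl fun i _ => this i, Finset.sum_add_distrib]
  rw [Finset.sum_ite_mem, Finset.univ_inter, Finset.sum_const, Finset.sum_const, h]
  norm_num

def D1 : Finset (Finset (Fin 8)) :=
  {∅, {3,4,5,6}, {1,2,5,6}, {1,2,3,4}, {0,2,4,6}, {0,2,3,5}, {0,1,4,5}, {0,1,3,6}}

def D2 : Finset (Finset (Fin 8)) :=
  {∅, {2,4,5,6}, {0,3,5,6}, {0,1,4,6}, {0,1,2,5}, {1,2,3,6}, {0,2,3,4}, {1,3,4,5}}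

lemma D1_card : D1.card = 8 := by decide
lemma D2_card : D2.card = 8 := by decide
lemma D1_mem : ∀ C ∈ D1, 7 ∉ C ∧ Even C.card := by decide
lemma D2_mem : ∀ C ∈ D2, 7 ∉ C ∧ Even C.card := by decide
lemma D1_orth : ∀ C ∈ D1, ∀ C' ∈ D1, C ≠ C' → (C ∆ C').card = 4 := by decide
lemma D2_orth : ∀ C ∈ D2, ∀ C' ∈ D2, C ≠ C' → (C ∆ C').card = 4 := by decide
lemma D_inter : ∀ C, C ∈ D1 → C ∈ D2 → C = ∅ := by decide
lemma D1_empty : (∅ : Finset (Fin 8)) ∈ D1 := by decide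
lemma D2_empty : (∅ : Finset (Fin 8)) ∈ D2 := by decide

lemma empty_symmDiff' (N : Finset (Fin 8)) : (∅ : Finset (Fin 8)) ∆ N = N := by
  ext i; simp [Finset.mem_symmDiff]

lemma symmDiff_empty' (S : Finset (Fin 8)) : S ∆ (∅ : Finset (Fin 8)) = S := by
  ext i; simp [Finset.mem_symmDiff]

lemma symmDiff_univ' (S : Finset (Fin 8)) : S ∆ (univ : Finset (Fin 8)) = Sᶜ := by
  ext i; simp [Finset.mem_symmDiff]

lemma symmDiff_cancel' (S C C' : Finset (Fin 8)) : (S ∆ C) ∆ (S ∆ C') = C ∆ C' := by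
  ext i; simp [Finset.mem_symmDiff]; tauto

lemma pack_isOmega (D : Finset (Finset (Fin 8))) (hcard : D.card = 8)
    (hmem : ∀ C ∈ D, 7 ∉ C ∧ Even C.card)
    (horth : ∀ C ∈ D, ∀ C' ∈ D, C ≠ C' → (C ∆ C').card = 4)
    (S : Finset (Fin 8)) (hS7 : 7 ∉ S) (hSe : Even S.card) :
    IsOmegaPsi ↑(D.image fun C => vv (S ∆ C)) := by
  have hinj : Function.Injective (fun C : Finset (Fin 8) => vv (S ∆ C)) := by
    intro C C' h
    have := vv_inj h
    exact symmDiff_right_injective S this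
  refine ⟨?_, ?_, ?_⟩
  · intro α hα
    simp only [Finset.coe_image, Set.mem_image, Finset.mem_coe] at hα
    obtain ⟨C, hC, rfl⟩ := hα
    refine isPsi_vv ?_ (even_card_symmDiff hSe (hmem C hC).2)
    have := (hmem C hC).1
    simp only [Finset.mem_symmDiff]
    tauto
  · rw [Set.ncard_coe_finset, Finset.card_image_of_injective _ hinj, hcard]
  · intro α hα β hβ hne
    simp only [Finset.coe_image, Set.mem_image, Finset.mem_coe] at hα hβ
    obtain ⟨C, hC, rfl⟩ := hα
    obtain ⟨C', hC', rfl⟩ := hβ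
    have hCC' : C ≠ C' := fun h => hne (by rw [h])
    refine inner_vv ?_
    rw [symmDiff_cancel']
    exact horth C hC C' hC' hCC'

lemma mem_image_symm (σ : Equiv.Perm (Fin 8)) (S : Finset (Fin 8)) (i : Fin 8) :
    i ∈ S.image σ.symm ↔ σ i ∈ S := by
  simp only [Finset.mem_image]
  constructor
  · rintro ⟨s, hs, rfl⟩; simpa using hs
  · intro h; exact ⟨σ i, h, by simp⟩

/-- An element of W(D_8) acting on R^8: a signed permutation with an even number of
sign changes acts trivially on all of Ω_Ψ (hence on the 240 packings of PG(3,2))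
if and only if it is the identity or the longest element w₀ = −1.  In other words,
the kernel of the action of W(D_8) on the packings is exactly the centre {1, w₀}. -/
theorem kernel_of_D8_action
    (g : (Fin 8 → ℝ) →ₗ[ℝ] (Fin 8 → ℝ)) (σ : Equiv.Perm (Fin 8)) (ε : Fin 8 → ℝ)
    (hε : ∀ i, ε i = 1 ∨ ε i = -1)
    (heven : Even {i : Fin 8 | ε i = -1}.ncard)
    (hg : ∀ (v : Fin 8 → ℝ) (i : Fin 8), g v i = ε i * v (σ i)) :
    (∀ A : Set (Fin 8 → ℝ), IsOmegaPsi A → psiAct g A = A) ↔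
      (g = LinearMap.id ∨ g = -LinearMap.id) := by
  constructor
  · intro H
    set N : Finset (Fin 8) := univ.filter (fun i => ε i = -1) with hN
    have hNe : Even N.card := by
      have hs : {i : Fin 8 | ε i = -1} = ↑N := by ext i; simp [hN]
      rwa [hs, Set.ncard_coe_finset] at heven
    have gv : ∀ S : Finset (Fin 8), g (vv S) = vv ((S.image σ.symm) ∆ N) := by
      intro S
      funext i
      rw [hg]
      rcases hε i with h2 | h2
      · have h2' : ¬ ε i = -1 := by rw [h2]; norm_num
        by_cases h1 : σ i ∈ S
        · have hm : i ∈ (S.image σ.symm) ∆ N := by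
            simp only [Finset.mem_symmDiff, mem_image_symm, hN, Finset.mem_filter,
              Finset.mem_univ, true_and]
            tauto
          simp [vv, hm, h1, h2]
        · have hm : i ∉ (S.image σ.symm) ∆ N := by
            simp only [Finset.mem_symmDiff, mem_image_symm, hN, Finset.mem_filter,
              Finset.mem_univ, true_and]
            tauto
          simp [vv, hm, h1, h2]
      · by_cases h1 : σ i ∈ S
        · have hm : i ∉ (S.image σ.symm) ∆ N := by
            simp only [Finset.mem_symmDiff, mem_image_symm, hN, Finset.mem_filter,
              Finset.mem_univ, true_and]
            tauto
          simp [vv, hm, h1, h2]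
        · have hm : i ∈ (S.image σ.symm) ∆ N := by
            simp only [Finset.mem_symmDiff, mem_image_symm, hN, Finset.mem_filter,
              Finset.mem_univ, true_and]
            tauto
          simp [vv, hm, h1, h2]
    have key : ∀ S : Finset (Fin 8), 7 ∉ S → Even S.card →
        (S.image σ.symm) ∆ N = S ∨ (S.image σ.symm) ∆ N = Sᶜ := by
      intro S hS7 hSe
      set U : Finset (Fin 8) := (S.image σ.symm) ∆ N with hU
      have hUe : Even U.card := by
        refine even_card_symmDiff ?_ hNe
        rwa [Finset.card_image_of_injective _ σ.symm.injective]
      have hU8 : U.card ≤ 8 := by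
        have := Finset.card_le_univ U
        simpa using this
      set T : Finset (Fin 8) := if 7 ∈ U then Uᶜ else U with hT
      have hT7 : 7 ∉ T := by
        by_cases h : 7 ∈ U <;> simp [hT, h]
      have hTe : Even T.card := by
        by_cases h : 7 ∈ U
        · simp only [hT, if_pos h]
          rw [Finset.card_compl]
          obtain ⟨a, ha⟩ := hUe
          exact ⟨(8 - U.card)/2, by simp; omega⟩
        · simpa [hT, if_neg h] using hUe
      have hgS : g (vv S) = vv T ∨ g (vv S) = -vv T := by
        by_cases h : 7 ∈ U
        · right
          rw [gv S, ← hU]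
          have : vv Tᶜ = -vv T := vv_compl T
          have hTc : Tᶜ = U := by simp [hT, if_pos h]
          rw [← hTc, vv_compl]
        · left
          rw [gv S, ← hU, hT, if_neg h]
      have extract : ∀ D : Finset (Finset (Fin 8)), D.card = 8 →
          (∀ C ∈ D, 7 ∉ C ∧ Even C.card) →
          (∀ C ∈ D, ∀ C' ∈ D, C ≠ C' → (C ∆ C').card = 4) →
          (∅ : Finset (Fin 8)) ∈ D → S ∆ T ∈ D := by
        intro D hc hm ho he
        have hpack := pack_isOmega D hc hm ho S hS7 hSe
        have hmem : vv T ∈ (↑(D.image fun C => vv (S ∆ C)) : Set (Fin 8 → ℝ)) := by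
          rw [← H _ hpack]
          refine ⟨isPsi_vv hT7 hTe, vv S, ?_, hgS⟩
          simp only [Finset.coe_image, Set.mem_image, Finset.mem_coe]
          exact ⟨∅, he, by rw [symmDiff_empty']⟩
        simp only [Finset.coe_image, Set.mem_image, Finset.mem_coe] at hmem
        obtain ⟨C, hC, hCT⟩ := hmem
        have : S ∆ C = T := vv_inj hCT
        have : C = S ∆ T := by rw [← this, symmDiff_symmDiff_cancel_left]
        rwa [← this]
      have h1 := extract D1 D1_card D1_mem D1_orth D1_empty
      have h2 := extract D2 D2_card D2_mem D2_orth D2_empty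
      have hST : S ∆ T = ∅ := D_inter _ h1 h2
      have hTS : T = S := by
        have := congrArg (fun X => S ∆ X) hST
        simpa [symmDiff_symmDiff_cancel_left, symmDiff_empty'] using this
      by_cases h : 7 ∈ U
      · right
        have : Uᶜ = S := by rw [← hTS]; simp [hT, if_pos h]
        rw [← this, compl_compl]
      · left
        rw [← hTS]; simp [hT, if_neg h]
    -- Step 1 : N = ∅ or N = univ
    have hNcase : N = ∅ ∨ N = univ := by
      have h := key ∅ (by simp) (by simp)
      rcases h with h | h
      · left; rwa [Finset.image_empty, empty_symmDiff'] at h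
      · right; rw [Finset.image_empty, empty_symmDiff'] at h; rw [h]; ext i; simp
    -- Step 2 : σ fixes every pair
    have pairfix : ∀ a b : Fin 8, a ≠ b → a ≠ 7 → b ≠ 7 →
        ({σ.symm a, σ.symm b} : Finset (Fin 8)) = {a, b} := by
      intro a b hab ha7 hb7
      have hS7 : (7 : Fin 8) ∉ ({a, b} : Finset (Fin 8)) := by
        simp [Ne.symm ha7, Ne.symm hb7, ha7, hb7]
      have hcard2 : ({a, b} : Finset (Fin 8)).card = 2 := by
        rw [Finset.card_insert_of_notMem (by simpa using hab), Finset.card_singleton]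
      have hSe : Even ({a, b} : Finset (Fin 8)).card := by rw [hcard2]; exact ⟨1, rfl⟩
      have himg : ({a, b} : Finset (Fin 8)).image σ.symm = {σ.symm a, σ.symm b} := by
        rw [Finset.image_insert, Finset.image_singleton]
      have hPcard : ({σ.symm a, σ.symm b} : Finset (Fin 8)).card = 2 := by
        rw [Finset.card_insert_of_notMem (by simp [σ.symm.injective.ne_iff, hab]),
          Finset.card_singleton]
      have h := key {a, b} hS7 hSe
      rw [himg] at h
      rcases hNcase with hN0 | hNu
      · rw [hN0, symmDiff_empty'] at h
        rcases h with h | h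
        · exact h
        · exfalso
          have := congrArg Finset.card h
          rw [hPcard, Finset.card_compl, hcard2] at this
          simp at this
      · rw [hNu, symmDiff_univ'] at h
        rcases h with h | h
        · exfalso
          have := congrArg Finset.card h
          rw [Finset.card_compl, hPcard, hcard2] at this
          simp at this
        · exact compl_injective h
    -- Step 3 : σ.symm fixes all points
    have fix : ∀ i : Fin 8, σ.symm i = i := by
      have fix' : ∀ i : Fin 8, i ≠ 7 → σ.symm i = i := by
        intro i hi
        by_contra hne
        obtain ⟨b, c, hbc, hbi, hci, hb7, hc7⟩ :
            ∃ b c : Fin 8, b ≠ c ∧ b ≠ i ∧ c ≠ i ∧ b ≠ 7 ∧ c ≠ 7 := by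
          by_cases h0 : i = 0
          · exact ⟨1, 2, by decide, by rw [h0]; decide, by rw [h0]; decide, by decide, by decide⟩
          · by_cases h1 : i = 1
            · exact ⟨0, 2, by decide, by rw [h1]; decide, by rw [h1]; decide, by decide, by decide⟩
            · exact ⟨0, 1, by decide, fun h => h0 h.symm, fun h => h1 h.symm, by decide, by decide⟩
        have e1 := pairfix i b (Ne.symm hbi) hi hb7
        have e2 := pairfix i c (Ne.symm hci) hi hc7
        have m1 : σ.symm i ∈ ({i, b} : Finset (Fin 8)) := by
          rw [← e1]; simp
        have m2 : σ.symm i ∈ ({i, c} : Finset (Fin 8)) := by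
          rw [← e2]; simp
        simp only [Finset.mem_insert, Finset.mem_singleton] at m1 m2
        rcases m1 with m1 | m1
        · exact hne m1
        · rcases m2 with m2 | m2
          · exact hne m2
          · exact hbc (m1 ▸ m2 ▸ rfl)
      intro i
      by_cases hi : i = 7
      · subst hi
        by_contra hne
        have h1 : σ.symm (σ.symm 7) = σ.symm 7 := fix' _ hne
        exact hne (σ.symm.injective h1)
      · exact fix' i hi
    have hσ : ∀ i, σ i = i := by
      intro i
      have := fix (σ i)
      rw [Equiv.symm_apply_apply] at this
      exact this.symm
    -- Step 4 : conclude
    rcases hNcase with hN0 | hNu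
    · left
      have hε1 : ∀ i, ε i = 1 := by
        intro i
        rcases hε i with h | h
        · exact h
        · exfalso
          have : i ∈ N := by simp [hN, h]
          rw [hN0] at this
          simp at this
      apply LinearMap.ext
      intro v
      funext i
      rw [hg, hσ, hε1, one_mul]
      rfl
    · right
      have hε1 : ∀ i, ε i = -1 := by
        intro i
        have : i ∈ N := by rw [hNu]; simp
        simpa [hN] using this
      apply LinearMap.ext
      intro v
      funext i
      rw [hg, hσ, hε1]
      simp
  · rintro (rfl | rfl) <;> intro A hA <;> ext β <;>
      simp only [psiAct, Set.mem_setOf_eq, LinearMap.id_coe, id_eq, LinearMap.neg_apply]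
    · constructor
      · rintro ⟨hβ, α, hα, (rfl | h)⟩
        · exact hα
        · exfalso
          have h1 : α 7 = 1/2 := (hA.1 α hα).2.1
          have h2 : β 7 = 1/2 := hβ.2.1
          have := congrFun h 7
          simp [h1, h2] at this
          norm_num at this
      · intro hβ
        exact ⟨hA.1 β hβ, β, hβ, Or.inl rfl⟩
    · constructor
      · rintro ⟨hβ, α, hα, (h | h)⟩
        · exfalso
          have h1 : α 7 = 1/2 := (hA.1 α hα).2.1
          have h2 : β 7 = 1/2 := hβ.2.1
          have := congrFun h 7
          simp [Pi.neg_apply, h1, h2] at this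
          norm_num at this
        · have : α = β := by
            have := congrArg Neg.neg h
            simpa using this
          exact this ▸ hα
      · intro hβ
        exact ⟨hA.1 β hβ, β, hβ, Or.inr (by simp)⟩
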